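/- arXiv:2105.00243 — 3 statements merged into one kernel-verified Lean document; each statement's English description precedes it below -/
import Mathlib

section
/- (Theorem 1: one-round deviation of FedProto.) Let H be a real Hilbert space, V a real normed space, m ≥ 1 and E ≥ 1 natural numbers, and fix constants L₁ ≥ 0, L₂ ≥ 0, η ≥ 0, σ² ≥ 0, G ≥ 0, λ ≥ 0. For each client j ≤ m let F_j : H → V be L₂-Lipschitz, let q_j ≥ 0 with Σ_j q_j = 1, and fix a client index i ≤ m and a function S_i : H → ℝ. For a prototype c ∈ V define client i's local loss L_i(w; c) = S_i(w) + λ·‖F_i(w) − c‖. Let (Ω, 𝓐, P) be a probability space with a filtration 𝓕₀ ⊆ … ⊆ 𝓕_E. Given deterministic initial parameters W_{j,0} ∈ H for every client j, let each client run E SGD steps W_{j,e+1} = W_{j,e} − η·g_{j,e}, where each g_{j,e} : Ω → H is square-integrable and 𝓕_{e+1}-measurable, and E[‖g_{j,e}‖] ≤ G for all j, e. Let c = Σ_j q_j·F_j(W_{j,0}) be the current global prototype, assume w ↦ L_i(w; c) is differentiable with L₁-Lipschitz gradient, and assume for every e < E that, almost surely, E[g_{i,e} | 𝓕_e] = ∇_w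 L_i(W_{i,e}; c) and E[‖g_{i,e} − ∇_w L_i(W_{i,e}; c)‖² | 𝓕_e] ≤ σ², with all relevant functions integrable. Let c′ = Σ_j q_j·F_j(W_{j,E}) be the newly aggregated global prototype. Then E[L_i(W_{i,E}; c′)] ≤ L_i(W_{i,0}; c) − (η − L₁η²/2)·Σ_{e=0}^{E−1} E[‖∇_w L_i(W_{i,e}; c)‖²] + (L₁·E·η²/2)·σ² + λ·L₂·η·E·G. -/
open MeasureTheory

open scoped RealInnerProductSpace

lemma fedproto_descent {H : Type*} [NormedAddCommGroup H] [InnerProductSpace ℝ H]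
    [CompleteSpace H]
    {L₁ : ℝ} (hL₁ : 0 ≤ L₁) {f : H → ℝ} {f' : H → H}
    (hd : ∀ w, HasGradientAt f (f' w) w)
    (hl : ∀ x y, ‖f' x - f' y‖ ≤ L₁ * ‖x - y‖) (x y : H) :
    f y ≤ f x + ⟪f' x, y - x⟫ + L₁ / 2 * ‖y - x‖ ^ 2 := by
  have hf'cont : Continuous f' := by
    refine (LipschitzWith.of_dist_le_mul (K := L₁.toNNReal) fun a b => ?_).continuous
    rw [Real.coe_toNNReal L₁ hL₁, dist_eq_norm, dist_eq_norm]
    exact hl a b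
  set γ : ℝ → H := fun t => x + t • (y - x) with hγdef
  have hγ : ∀ t : ℝ, HasDerivAt γ (y - x) t := by
    intro t
    have h := ((hasDerivAt_id t).smul_const (y - x)).const_add x
    rw [one_smul] at h
    exact h
  have hγcont : Continuous γ := by continuity
  set φ' : ℝ → ℝ := fun t => ⟪f' (γ t), y - x⟫ with hφ'def
  have hφ : ∀ t : ℝ, HasDerivAt (fun t => f (γ t)) (φ' t) t := by
    intro t
    have h := ((hd (γ t)).hasFDerivAt.comp_hasDerivAt t (hγ t))
    simpa [hφ'def, InnerProductSpace.toDual_apply_apply, Function.comp_def] using h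
  have hφ'cont : Continuous φ' := ((hf'cont.comp hγcont).inner continuous_const)
  have hFTC : f (γ 1) - f (γ 0) = ∫ t in (0:ℝ)..1, φ' t := by
    refine (intervalIntegral.integral_eq_sub_of_hasDerivAt (fun t _ => hφ t) ?_).symm
    exact (hφ'cont.intervalIntegrable 0 1)
  have hγ0 : γ 0 = x := by simp [hγdef]
  have hγ1 : γ 1 = y := by simp [hγdef]
  have hbound : ∫ t in (0:ℝ)..1, φ' t ≤ ⟪f' x, y - x⟫ + L₁ / 2 * ‖y - x‖ ^ 2 := by
    have hmono : ∫ t in (0:ℝ)..1, φ' t ≤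
        ∫ t in (0:ℝ)..1, (⟪f' x, y - x⟫ + L₁ * t * ‖y - x‖ ^ 2) := by
      refine intervalIntegral.integral_mono_on zero_le_one
        (hφ'cont.intervalIntegrable 0 1)
        (((continuous_const.add (((continuous_const.mul continuous_id).mul
          continuous_const))).intervalIntegrable 0 1)) ?_
      intro t ht
      have h1 : φ' t - ⟪f' x, y - x⟫ = ⟪f' (γ t) - f' x, y - x⟫ := by
        rw [inner_sub_left]
      have h2 : ⟪f' (γ t) - f' x, y - x⟫ ≤ ‖f' (γ t) - f' x‖ * ‖y - x‖ :=
        real_inner_le_norm _ _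
      have h3 : ‖f' (γ t) - f' x‖ ≤ L₁ * (t * ‖y - x‖) := by
        have := hl (γ t) x
        simpa [hγdef, norm_smul, abs_of_nonneg ht.1] using this
      have h4 : ‖f' (γ t) - f' x‖ * ‖y - x‖ ≤ L₁ * t * ‖y - x‖ ^ 2 := by
        nlinarith [norm_nonneg (y - x), norm_nonneg (f' (γ t) - f' x)]
      linarith
    have hval : ∫ t in (0:ℝ)..1, (⟪f' x, y - x⟫ + L₁ * t * ‖y - x‖ ^ 2)
        = ⟪f' x, y - x⟫ + L₁ / 2 * ‖y - x‖ ^ 2 := by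
      have h1 : (fun t : ℝ => ⟪f' x, y - x⟫ + L₁ * t * ‖y - x‖ ^ 2)
          = fun t : ℝ => (L₁ * ‖y - x‖ ^ 2) * t + ⟪f' x, y - x⟫ := by
        funext t; ring
      rw [h1, intervalIntegral.integral_add ((by fun_prop : Continuous fun t : ℝ => L₁ * ‖y - x‖ ^ 2 * t).intervalIntegrable 0 1) intervalIntegrable_const,
        intervalIntegral.integral_const_mul, integral_id, intervalIntegral.integral_const]
      norm_num
      ring
    linarith [hmono, hval.le]
  rw [hγ0, hγ1] at hFTC
  linarith [hFTC, hbound]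

lemma fedproto_integrable_inner {H : Type*} [NormedAddCommGroup H] [InnerProductSpace ℝ H]
    {Ω : Type*} {m0 : MeasurableSpace Ω} {P : Measure Ω}
    {f g : Ω → H} (hf : MemLp f 2 P) (hg : MemLp g 2 P) :
    Integrable (fun ω => ⟪f ω, g ω⟫) P := by
  have h := L2.integrable_inner (𝕜 := ℝ) (hf.toLp f) (hg.toLp g)
  refine h.congr ?_
  filter_upwards [hf.coeFn_toLp, hg.coeFn_toLp] with ω h1 h2
  rw [h1, h2]

lemma fedproto_condexpL2_ae_eq {H : Type*} [NormedAddCommGroup H] [InnerProductSpace ℝ H]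
    [CompleteSpace H]
    {Ω : Type*} {m m0 : MeasurableSpace Ω} (hm : m ≤ m0) {P : Measure Ω} [IsFiniteMeasure P]
    {g : Ω → H} (hg : MemLp g 2 P) :
    (condExpL2 H ℝ hm (hg.toLp g) : Ω → H) =ᵐ[P] P[g|m] := by
  refine ae_eq_condExp_of_forall_setIntegral_eq hm (hg.integrable one_le_two)
    (fun s _ hμs => integrableOn_condExpL2_of_measure_ne_top hm hμs.ne _)
    (fun s hs hμs => ?_) (aestronglyMeasurable_condExpL2 hm _)
  rw [integral_condExpL2_eq hm _ hs hμs.ne]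
  exact setIntegral_congr_ae (hm s hs) ((hg.coeFn_toLp).mono fun x hx _ => hx)

lemma fedproto_integral_inner_condexp {H : Type*} [NormedAddCommGroup H]
    [InnerProductSpace ℝ H] [CompleteSpace H]
    {Ω : Type*} {m m0 : MeasurableSpace Ω} (hm : m ≤ m0) {P : Measure Ω} [IsFiniteMeasure P]
    {X g : Ω → H} (hXm : StronglyMeasurable[m] X) (hX : MemLp X 2 P) (hg : MemLp g 2 P) :
    ∫ ω, ⟪X ω, g ω⟫ ∂P = ∫ ω, ⟪X ω, (P[g|m]) ω⟫ ∂P := by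
  set Xl := hX.toLp X with hXl
  set gl := hg.toLp g with hgl
  have hX' : AEStronglyMeasurable[m] (Xl : Ω → H) P :=
    AEStronglyMeasurable.congr hXm.aestronglyMeasurable hX.coeFn_toLp.symm
  have h1 : ∫ ω, ⟪X ω, g ω⟫ ∂P = @inner ℝ _ _ Xl gl := by
    rw [L2.inner_def]
    refine (integral_congr_ae ?_).symm
    filter_upwards [hX.coeFn_toLp, hg.coeFn_toLp] with ω ha hb
    rw [ha, hb]
  have h2 : @inner ℝ _ _ Xl gl
      = @inner ℝ _ _ Xl ((condExpL2 H ℝ hm gl : Lp H 2 P)) := by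
    rw [real_inner_comm, ← inner_condExpL2_eq_inner_fun hm gl Xl hX', real_inner_comm]
  rw [h1, h2, L2.inner_def]
  refine integral_congr_ae ?_
  filter_upwards [hX.coeFn_toLp, fedproto_condexpL2_ae_eq hm hg] with ω ha hb
  rw [ha, hb]

/-- Theorem 1 of FedProto (one-round deviation): for a client `i` whose local loss is
`L_i(w; c) = S_i(w) + λ‖F_i(w) − c‖`, after one communication round consisting of `E` local
SGD steps on every client followed by global prototype aggregation, the expected local loss
satisfies the stated one-round deviation bound. -/
theorem fedproto_theorem1_one_round_deviation
    {H : Type*} [NormedAddCommGroup H] [InnerProductSpace ℝ H] [CompleteSpace H]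
    {V : Type*} [NormedAddCommGroup V] [NormedSpace ℝ V]
    (m E : ℕ) (hm : 1 ≤ m) (hE : 1 ≤ E)
    (L₁ L₂ η σ2 G lam : ℝ)
    (hL₁ : 0 ≤ L₁) (hL₂ : 0 ≤ L₂) (hη : 0 ≤ η) (hσ2 : 0 ≤ σ2) (hG : 0 ≤ G)
    (hlam : 0 ≤ lam)
    (F : Fin m → H → V)
    (hFlip : ∀ j : Fin m, ∀ x y : H, ‖F j x - F j y‖ ≤ L₂ * ‖x - y‖)
    (q : Fin m → ℝ) (hq : ∀ j, 0 ≤ q j) (hqsum : ∑ j, q j = 1)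
    (i : Fin m) (S : H → ℝ)
    (Li : H → V → ℝ) (hLi : ∀ w c, Li w c = S w + lam * ‖F i w - c‖)
    {Ω : Type*} {m0 : MeasurableSpace Ω} (P : Measure Ω) [IsProbabilityMeasure P]
    (𝓕 : Filtration ℕ m0)
    (W0 : Fin m → H) (g : Fin m → ℕ → Ω → H) (W : Fin m → ℕ → Ω → H)
    (hW0 : ∀ j, W j 0 = fun _ => W0 j)
    (hWstep : ∀ j, ∀ e, W j (e + 1) = fun ω => W j e ω - η • g j e ω)
    (hgmeas : ∀ j : Fin m, ∀ e < E, StronglyMeasurable[𝓕 (e + 1)] (g j e))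
    (hgsq : ∀ j : Fin m, ∀ e < E, MemLp (g j e) 2 P)
    (hGbound : ∀ j : Fin m, ∀ e < E, (∫ ω, ‖g j e ω‖ ∂P) ≤ G)
    -- the current global prototype
    (c : V) (hc : c = ∑ j, q j • F j (W0 j))
    -- smoothness of client i's local objective `w ↦ Li w c`
    (f' : H → H)
    (hdiff : ∀ w, HasGradientAt (fun w => Li w c) (f' w) w)
    (hlip : ∀ x y, ‖f' x - f' y‖ ≤ L₁ * ‖x - y‖)
    -- unbiasedness and bounded conditional variance of client i's stochastic gradients
    (hunbiased : ∀ e < E, P[g i e | 𝓕 e] =ᵐ[P] fun ω => f' (W i e ω))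
    (hvar : ∀ e < E,
      P[(fun ω => ‖g i e ω - f' (W i e ω)‖ ^ 2) | 𝓕 e] ≤ᵐ[P] fun _ => σ2)
    -- the newly aggregated global prototype
    (c' : Ω → V) (hc' : ∀ ω, c' ω = ∑ j, q j • F j (W j E ω))
    -- integrability of all relevant functions
    (hLiint : ∀ e ≤ E, Integrable (fun ω => Li (W i e ω) c) P)
    (hgradint : ∀ e < E, Integrable (fun ω => ‖f' (W i e ω)‖ ^ 2) P)
    (hfinal : Integrable (fun ω => Li (W i E ω) (c' ω)) P) :
    (∫ ω, Li (W i E ω) (c' ω) ∂P) ≤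
      Li (W0 i) c
        - (η - L₁ * η ^ 2 / 2) * ∑ e ∈ Finset.range E, (∫ ω, ‖f' (W i e ω)‖ ^ 2 ∂P)
        + (L₁ * (E : ℝ) * η ^ 2 / 2) * σ2 + lam * L₂ * η * (E : ℝ) * G := by
  classical
  have hmle : ∀ e, 𝓕 e ≤ m0 := fun e => 𝓕.le e
  have hf'cont : Continuous f' := by
    refine (LipschitzWith.of_dist_le_mul (K := L₁.toNNReal) fun a b => ?_).continuous
    rw [Real.coe_toNNReal L₁ hL₁, dist_eq_norm, dist_eq_norm]
    exact hlip a b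
  -- measurability of iterates
  have hWmeas : ∀ e ≤ E, StronglyMeasurable[𝓕 e] (W i e) := by
    intro e
    induction e with
    | zero => intro _; rw [hW0]; exact stronglyMeasurable_const
    | succ e ih =>
      intro he
      have he' : e < E := lt_of_lt_of_le (Nat.lt_succ_self e) he
      rw [hWstep]
      exact ((ih he'.le).mono (𝓕.mono (Nat.le_succ e))).sub ((hgmeas i e he').const_smul η)
  have hWLp : ∀ e ≤ E, MemLp (W i e) 2 P := by
    intro e
    induction e with
    | zero => intro _; rw [hW0]; exact memLp_const _
    | succ e ih =>
      intro he
      have he' : e < E := lt_of_lt_of_le (Nat.lt_succ_self e) he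
      rw [hWstep]
      exact (ih he'.le).sub ((hgsq i e he').const_smul η)
  have hXmeas : ∀ e ≤ E, StronglyMeasurable[𝓕 e] (fun ω => f' (W i e ω)) :=
    fun e he => hf'cont.comp_stronglyMeasurable (hWmeas e he)
  have hXLp : ∀ e < E, MemLp (fun ω => f' (W i e ω)) 2 P := fun e he =>
    (memLp_two_iff_integrable_sq_norm
      (((hXmeas e he.le).mono (hmle e)).aestronglyMeasurable)).mpr (hgradint e he)
  -- the one-step descent inequality
  have hstep : ∀ e < E,
      (∫ ω, Li (W i (e+1) ω) c ∂P) ≤ (∫ ω, Li (W i e ω) c ∂P)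
        - (η - L₁ * η ^ 2 / 2) * (∫ ω, ‖f' (W i e ω)‖ ^ 2 ∂P) + L₁ * η ^ 2 / 2 * σ2 := by
    intro e he
    have hgL2 := hgsq i e he
    have hXL2 := hXLp e he
    -- pointwise descent
    have hpt : ∀ ω, Li (W i (e+1) ω) c ≤ Li (W i e ω) c
        - η * ⟪f' (W i e ω), g i e ω⟫ + L₁ / 2 * (η ^ 2 * ‖g i e ω‖ ^ 2) := by
      intro ω
      have hdes := fedproto_descent hL₁ hdiff hlip (W i e ω) (W i (e+1) ω)
      have hdiffpt : W i (e+1) ω - W i e ω = -(η • g i e ω) := by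
        rw [hWstep i e]; beta_reduce; abel
      rw [hdiffpt] at hdes
      have h1 : ⟪f' (W i e ω), -(η • g i e ω)⟫ = -(η * ⟪f' (W i e ω), g i e ω⟫) := by
        rw [inner_neg_right, real_inner_smul_right]
      have h2 : ‖-(η • g i e ω)‖ ^ 2 = η ^ 2 * ‖g i e ω‖ ^ 2 := by
        rw [norm_neg, norm_smul, mul_pow, Real.norm_eq_abs, sq_abs]
      rw [h1, h2] at hdes
      calc Li (W i (e+1) ω) c ≤ Li (W i e ω) c + -(η * ⟪f' (W i e ω), g i e ω⟫)
            + L₁ / 2 * (η ^ 2 * ‖g i e ω‖ ^ 2) := hdes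
        _ = Li (W i e ω) c - η * ⟪f' (W i e ω), g i e ω⟫
            + L₁ / 2 * (η ^ 2 * ‖g i e ω‖ ^ 2) := by ring
    -- integrability facts
    have hinner_int : Integrable (fun ω => ⟪f' (W i e ω), g i e ω⟫) P :=
      fedproto_integrable_inner hXL2 hgL2
    have hgsq_int : Integrable (fun ω => ‖g i e ω‖ ^ 2) P :=
      (memLp_two_iff_integrable_sq_norm hgL2.1).mp hgL2
    have hdiffsq_int : Integrable (fun ω => ‖g i e ω - f' (W i e ω)‖ ^ 2) P :=
      (memLp_two_iff_integrable_sq_norm (hgL2.sub hXL2).1).mp (hgL2.sub hXL2)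
    -- key integral identities
    have hI2 : (∫ ω, ⟪f' (W i e ω), g i e ω⟫ ∂P) = ∫ ω, ‖f' (W i e ω)‖ ^ 2 ∂P := by
      rw [fedproto_integral_inner_condexp (hmle e) (hXmeas e he.le) hXL2 hgL2]
      refine integral_congr_ae ?_
      filter_upwards [hunbiased e he] with ω hω
      rw [hω, real_inner_self_eq_norm_sq]
    have hgnorm_eq : (∫ ω, ‖g i e ω‖ ^ 2 ∂P)
        = (∫ ω, ‖g i e ω - f' (W i e ω)‖ ^ 2 ∂P) + ∫ ω, ‖f' (W i e ω)‖ ^ 2 ∂P := by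
      have hptid : ∀ ω, ‖g i e ω‖ ^ 2 = ‖g i e ω - f' (W i e ω)‖ ^ 2
          + 2 * ⟪f' (W i e ω), g i e ω⟫ - ‖f' (W i e ω)‖ ^ 2 := by
        intro ω
        have := norm_sub_sq_real (g i e ω) (f' (W i e ω))
        rw [real_inner_comm] at this
        linarith
      calc (∫ ω, ‖g i e ω‖ ^ 2 ∂P)
          = ∫ ω, (‖g i e ω - f' (W i e ω)‖ ^ 2
            + 2 * ⟪f' (W i e ω), g i e ω⟫ - ‖f' (W i e ω)‖ ^ 2) ∂P :=
            integral_congr_ae (Filter.Eventually.of_forall hptid)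
        _ = (∫ ω, ‖g i e ω - f' (W i e ω)‖ ^ 2 ∂P)
            + 2 * (∫ ω, ⟪f' (W i e ω), g i e ω⟫ ∂P) - ∫ ω, ‖f' (W i e ω)‖ ^ 2 ∂P := by
            have hA : Integrable (fun ω => ‖g i e ω - f' (W i e ω)‖ ^ 2
                + 2 * ⟪f' (W i e ω), g i e ω⟫) P := hdiffsq_int.add (hinner_int.const_mul 2)
            rw [integral_sub hA (hgradint e he),
              integral_add hdiffsq_int (hinner_int.const_mul 2), integral_const_mul]
        _ = (∫ ω, ‖g i e ω - f' (W i e ω)‖ ^ 2 ∂P) + ∫ ω, ‖f' (W i e ω)‖ ^ 2 ∂P := by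
            rw [hI2]; ring
    have hI1 : (∫ ω, ‖g i e ω - f' (W i e ω)‖ ^ 2 ∂P) ≤ σ2 := by
      haveI : SigmaFinite (P.trim (hmle e)) := by infer_instance
      calc (∫ ω, ‖g i e ω - f' (W i e ω)‖ ^ 2 ∂P)
          = ∫ ω, (P[(fun ω => ‖g i e ω - f' (W i e ω)‖ ^ 2) | 𝓕 e]) ω ∂P :=
            (integral_condExp (hmle e)).symm
        _ ≤ ∫ _ω, σ2 ∂P := integral_mono_ae integrable_condExp (integrable_const σ2) (hvar e he)
        _ = σ2 := by simp [measure_univ]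
    -- integrate the pointwise descent
    have hRHS_int : Integrable (fun ω => Li (W i e ω) c
        - η * ⟪f' (W i e ω), g i e ω⟫ + L₁ / 2 * (η ^ 2 * ‖g i e ω‖ ^ 2)) P :=
      ((hLiint e he.le).sub (hinner_int.const_mul η)).add
        ((hgsq_int.const_mul (η ^ 2)).const_mul (L₁ / 2))
    have hint : (∫ ω, Li (W i (e+1) ω) c ∂P) ≤
        ∫ ω, (Li (W i e ω) c - η * ⟪f' (W i e ω), g i e ω⟫
          + L₁ / 2 * (η ^ 2 * ‖g i e ω‖ ^ 2)) ∂P :=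
      integral_mono (hLiint (e+1) he) hRHS_int hpt
    have hsplit : (∫ ω, (Li (W i e ω) c - η * ⟪f' (W i e ω), g i e ω⟫
          + L₁ / 2 * (η ^ 2 * ‖g i e ω‖ ^ 2)) ∂P)
        = (∫ ω, Li (W i e ω) c ∂P) - η * (∫ ω, ⟪f' (W i e ω), g i e ω⟫ ∂P)
          + L₁ / 2 * (η ^ 2 * ∫ ω, ‖g i e ω‖ ^ 2 ∂P) := by
      have hC : Integrable (fun ω => Li (W i e ω) c - η * ⟪f' (W i e ω), g i e ω⟫) P :=
        (hLiint e he.le).sub (hinner_int.const_mul η)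
      have hD : Integrable (fun ω => L₁ / 2 * (η ^ 2 * ‖g i e ω‖ ^ 2)) P :=
        (hgsq_int.const_mul (η ^ 2)).const_mul (L₁ / 2)
      rw [integral_add hC hD,
        integral_sub (hLiint e he.le) (hinner_int.const_mul η),
        integral_const_mul, integral_const_mul, integral_const_mul]
    rw [hsplit, hI2, hgnorm_eq] at hint
    have hcoef : 0 ≤ L₁ / 2 * η ^ 2 := by positivity
    nlinarith [mul_le_mul_of_nonneg_left hI1 hcoef]
  -- telescoping
  have htel : ∀ e ≤ E, (∫ ω, Li (W i e ω) c ∂P) ≤ Li (W0 i) c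
      - (η - L₁ * η ^ 2 / 2) * ∑ k ∈ Finset.range e, (∫ ω, ‖f' (W i k ω)‖ ^ 2 ∂P)
      + (e : ℝ) * (L₁ * η ^ 2 / 2 * σ2) := by
    intro e
    induction e with
    | zero =>
      intro _
      rw [hW0]
      simp [measure_univ]
    | succ e ih =>
      intro he
      have he' : e < E := lt_of_lt_of_le (Nat.lt_succ_self e) he
      have h1 := hstep e he'
      have h2 := ih he'.le
      rw [Finset.sum_range_succ]
      push_cast
      linarith
  -- prototype drift bound
  have hWsum : ∀ (j : Fin m) (n : ℕ), W j n = fun ω => W0 j - ∑ e ∈ Finset.range n, η • g j e ω := by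
    intro j n
    induction n with
    | zero => rw [hW0]; simp
    | succ n ih =>
      rw [hWstep j n, ih]
      funext ω
      rw [Finset.sum_range_succ, sub_sub]
  have hWdiff : ∀ (j : Fin m) (ω : Ω), ‖W j E ω - W0 j‖ ≤ η * ∑ e ∈ Finset.range E, ‖g j e ω‖ := by
    intro j ω
    rw [hWsum j E]
    have : W0 j - (∑ e ∈ Finset.range E, η • g j e ω) - W0 j
        = -(∑ e ∈ Finset.range E, η • g j e ω) := by abel
    rw [this, norm_neg]
    calc ‖∑ e ∈ Finset.range E, η • g j e ω‖ ≤ ∑ e ∈ Finset.range E, ‖η • g j e ω‖ :=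
        norm_sum_le _ _
      _ = η * ∑ e ∈ Finset.range E, ‖g j e ω‖ := by
        rw [Finset.mul_sum]
        refine Finset.sum_congr rfl fun e _ => ?_
        rw [norm_smul, Real.norm_eq_abs, abs_of_nonneg hη]
  have hpt2 : ∀ ω, Li (W i E ω) (c' ω) ≤ Li (W i E ω) c
      + lam * ∑ j, q j * (L₂ * (η * ∑ e ∈ Finset.range E, ‖g j e ω‖)) := by
    intro ω
    have hcc' : ‖c' ω - c‖ ≤ ∑ j, q j * (L₂ * (η * ∑ e ∈ Finset.range E, ‖g j e ω‖)) := by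
      rw [hc', hc]
      calc ‖(∑ j, q j • F j (W j E ω)) - ∑ j, q j • F j (W0 j)‖
          = ‖∑ j, (q j • F j (W j E ω) - q j • F j (W0 j))‖ := by rw [Finset.sum_sub_distrib]
        _ ≤ ∑ j, ‖q j • F j (W j E ω) - q j • F j (W0 j)‖ := norm_sum_le _ _
        _ ≤ ∑ j, q j * (L₂ * (η * ∑ e ∈ Finset.range E, ‖g j e ω‖)) := by
            refine Finset.sum_le_sum fun j _ => ?_
            rw [← smul_sub, norm_smul, Real.norm_eq_abs, abs_of_nonneg (hq j)]
            refine mul_le_mul_of_nonneg_left ?_ (hq j)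
            calc ‖F j (W j E ω) - F j (W0 j)‖ ≤ L₂ * ‖W j E ω - W0 j‖ := hFlip j _ _
              _ ≤ L₂ * (η * ∑ e ∈ Finset.range E, ‖g j e ω‖) :=
                mul_le_mul_of_nonneg_left (hWdiff j ω) hL₂
    have hnorm : ‖F i (W i E ω) - c' ω‖ ≤ ‖F i (W i E ω) - c‖ + ‖c' ω - c‖ := by
      calc ‖F i (W i E ω) - c' ω‖ = ‖(F i (W i E ω) - c) - (c' ω - c)‖ := by
            congr 1; abel
        _ ≤ ‖F i (W i E ω) - c‖ + ‖c' ω - c‖ := norm_sub_le _ _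
    rw [hLi, hLi]
    have h6 : ‖F i (W i E ω) - c' ω‖ ≤ ‖F i (W i E ω) - c‖
        + ∑ j, q j * (L₂ * (η * ∑ e ∈ Finset.range E, ‖g j e ω‖)) :=
      le_trans hnorm (by linarith)
    have h7 := mul_le_mul_of_nonneg_left h6 hlam
    have h8 : lam * (‖F i (W i E ω) - c‖
        + ∑ j, q j * (L₂ * (η * ∑ e ∈ Finset.range E, ‖g j e ω‖)))
        = lam * ‖F i (W i E ω) - c‖
          + lam * ∑ j, q j * (L₂ * (η * ∑ e ∈ Finset.range E, ‖g j e ω‖)) := mul_add _ _ _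
    linarith
  have hgint1 : ∀ (j : Fin m), ∀ e < E, Integrable (fun ω => ‖g j e ω‖) P :=
    fun j e he => ((hgsq j e he).integrable one_le_two).norm
  have hB_int : Integrable (fun ω => ∑ j, q j * (L₂ * (η * ∑ e ∈ Finset.range E, ‖g j e ω‖))) P := by
    refine integrable_finset_sum _ fun j _ => ?_
    refine Integrable.const_mul ?_ (q j)
    refine Integrable.const_mul ?_ L₂
    refine Integrable.const_mul ?_ η
    exact integrable_finset_sum _ fun e he => hgint1 j e (Finset.mem_range.mp he)
  have hpart2 : (∫ ω, Li (W i E ω) (c' ω) ∂P) ≤ (∫ ω, Li (W i E ω) c ∂P)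
      + lam * L₂ * η * (E : ℝ) * G := by
    have h1 : (∫ ω, Li (W i E ω) (c' ω) ∂P) ≤
        ∫ ω, (Li (W i E ω) c + lam * ∑ j, q j * (L₂ * (η * ∑ e ∈ Finset.range E, ‖g j e ω‖))) ∂P :=
      integral_mono hfinal ((hLiint E le_rfl).add (hB_int.const_mul lam)) hpt2
    have h2 : (∫ ω, (Li (W i E ω) c
        + lam * ∑ j, q j * (L₂ * (η * ∑ e ∈ Finset.range E, ‖g j e ω‖))) ∂P)
        = (∫ ω, Li (W i E ω) c ∂P)
          + lam * ∑ j, q j * (L₂ * (η * ∑ e ∈ Finset.range E, ∫ ω, ‖g j e ω‖ ∂P)) := by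
      rw [integral_add (hLiint E le_rfl) (hB_int.const_mul lam), integral_const_mul]
      congr 1
      rw [integral_finset_sum _ fun j _ => by
        exact (((integrable_finset_sum _ fun e he => hgint1 j e (Finset.mem_range.mp he)).const_mul
          η).const_mul L₂).const_mul (q j)]
      congr 1
      refine Finset.sum_congr rfl fun j _ => ?_
      rw [integral_const_mul, integral_const_mul, integral_const_mul,
        integral_finset_sum _ fun e he => hgint1 j e (Finset.mem_range.mp he)]
    have h3 : ∑ j, q j * (L₂ * (η * ∑ e ∈ Finset.range E, ∫ ω, ‖g j e ω‖ ∂P))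
        ≤ ∑ j : Fin m, q j * (L₂ * (η * ((E : ℝ) * G))) := by
      refine Finset.sum_le_sum fun j _ => ?_
      refine mul_le_mul_of_nonneg_left (mul_le_mul_of_nonneg_left
        (mul_le_mul_of_nonneg_left ?_ hη) hL₂) (hq j)
      calc ∑ e ∈ Finset.range E, ∫ ω, ‖g j e ω‖ ∂P
          ≤ ∑ _e ∈ Finset.range E, G :=
            Finset.sum_le_sum fun e he => hGbound j e (Finset.mem_range.mp he)
        _ = (E : ℝ) * G := by simp [mul_comm]
    have h4 : ∑ j : Fin m, q j * (L₂ * (η * ((E : ℝ) * G))) = L₂ * (η * ((E : ℝ) * G)) := by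
      rw [← Finset.sum_mul, hqsum, one_mul]
    have h5 : lam * ∑ j, q j * (L₂ * (η * ∑ e ∈ Finset.range E, ∫ ω, ‖g j e ω‖ ∂P))
        ≤ lam * L₂ * η * (E : ℝ) * G := by
      calc lam * ∑ j, q j * (L₂ * (η * ∑ e ∈ Finset.range E, ∫ ω, ‖g j e ω‖ ∂P))
          ≤ lam * (L₂ * (η * ((E : ℝ) * G))) :=
            mul_le_mul_of_nonneg_left (le_trans h3 h4.le) hlam
        _ = lam * L₂ * η * (E : ℝ) * G := by ring
    linarith [h1, h2.le, h5]
  have hfin := htel E le_rfl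
  have harith : (E : ℝ) * (L₁ * η ^ 2 / 2 * σ2) = L₁ * (E : ℝ) * η ^ 2 / 2 * σ2 := by ring
  linarith [hfin, hpart2]
end

section
/- (Corollary 1: one-round decrease of FedProto.) Let L₁ > 0, L₂ > 0, G > 0 be reals, E ≥ 1 a natural number, σ² ≥ 0, λ ≥ 0, and let s, S be reals with 0 < s ≤ S (s represents ‖∇L_{tE+1/2}‖² and S represents Σ_{e=1/2}^{E−1}‖∇L_{tE+e}‖²). Assume λ < s/(L₂·E·G) and 0 < η < 2·(S − λ·L₂·E·G) / (L₁·(S + E·σ²)). Then (η − L₁η²/2)·S − (L₁·E·η²/2)·σ² − λ·L₂·η·E·G > 0; consequently, for any reals ℓ, ℓ′ satisfying the one-round deviation bound ℓ′ ≤ ℓ − (η − L₁η²/2)·S + (L₁·E·η²/2)·σ² + λ·L₂·η·E·G (the conclusion of Theorem 1), one has ℓ′ < ℓ. -/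
/-- Corollary 1 of FedProto (one-round decrease): if the importance weight `λ` and the
learning rate `η` satisfy `λ < s/(L₂ E G)` and
`η < 2(S − λ L₂ E G)/(L₁ (S + E σ²))`, then the per-round decrement is strictly positive,
so any pair `ℓ, ℓ′` satisfying the one-round deviation bound of Theorem 1 has `ℓ′ < ℓ`. -/
theorem fedproto_corollary1_one_round_decrease
    (L₁ L₂ G : ℝ) (hL₁ : 0 < L₁) (hL₂ : 0 < L₂) (hG : 0 < G)
    (E : ℕ) (hE : 1 ≤ E)
    (σ2 lam : ℝ) (hσ2 : 0 ≤ σ2) (hlam : 0 ≤ lam)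
    (s S : ℝ) (hs : 0 < s) (hsS : s ≤ S)
    (hlam' : lam < s / (L₂ * (E : ℝ) * G))
    (η : ℝ) (hη0 : 0 < η)
    (hη : η < 2 * (S - lam * L₂ * (E : ℝ) * G) / (L₁ * (S + (E : ℝ) * σ2))) :
    0 < (η - L₁ * η ^ 2 / 2) * S - (L₁ * (E : ℝ) * η ^ 2 / 2) * σ2
        - lam * L₂ * η * (E : ℝ) * G ∧
      ∀ ℓ ℓ' : ℝ,
        ℓ' ≤ ℓ - (η - L₁ * η ^ 2 / 2) * S + (L₁ * (E : ℝ) * η ^ 2 / 2) * σ2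
              + lam * L₂ * η * (E : ℝ) * G →
        ℓ' < ℓ := by
  have hEpos : (0:ℝ) < (E : ℝ) := by exact_mod_cast Nat.lt_of_lt_of_le Nat.zero_lt_one hE
  have hc : 0 < L₂ * (E : ℝ) * G := by positivity
  have hA : lam * (L₂ * (E : ℝ) * G) < s := (lt_div_iff₀ hc).mp hlam'
  have hA' : 0 < S - lam * L₂ * (E : ℝ) * G := by nlinarith
  have hD : 0 < L₁ * (S + (E : ℝ) * σ2) := by
    have : 0 < S := lt_of_lt_of_le hs hsS
    have : 0 < S + (E : ℝ) * σ2 := by positivity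
    positivity
  have hηD : η * (L₁ * (S + (E : ℝ) * σ2)) < 2 * (S - lam * L₂ * (E : ℝ) * G) := by
    have := (lt_div_iff₀ hD).mp hη
    linarith
  have key : 0 < (η - L₁ * η ^ 2 / 2) * S - (L₁ * (E : ℝ) * η ^ 2 / 2) * σ2
      - lam * L₂ * η * (E : ℝ) * G := by nlinarith [sq_nonneg η, mul_pos hη0 hA']
  exact ⟨key, fun ℓ ℓ' h => by linarith⟩
end

section
/- (Theorem 2: non-convex convergence rate of FedProto.) Let L₁ > 0, L₂ > 0, G > 0, σ² ≥ 0 and ε > 0 be reals, let E ≥ 1 and T ≥ 1 be natural numbers, and let λ, η be reals with 0 < λ < ε/(L₂·G) and 0 < η < 2·(ε − λ·L₂·G)/(L₁·(ε + σ²)). Let ℓ₀, ℓ₁, …, ℓ_T and G₀, …, G_{T−1} be reals with G_t ≥ 0 for all t, and let ℓ* be a real with ℓ_t ≥ ℓ* for all t ≤ T; set Δ = ℓ₀ − ℓ*. Assume for every t < T the one-round bound ℓ_{t+1} ≤ ℓ_t − (η − L₁η²/2)·G_t + (L₁·E·η²/2)·σ² + λ·L₂·η·E·G, and assume T > 2·Δ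 / (E·ε·(2η − L₁η²) − E·η·(L₁·η·σ² + 2·λ·L₂·G)). Then (1/(T·E))·Σ_{t=0}^{T−1} G_t < ε. -/
set_option maxHeartbeats 2000000 in
/-- Theorem 2 of FedProto (non-convex convergence rate): under the step-size and
regularization-weight conditions, if the one-round deviation bound of Theorem 1 holds in
every communication round and the number of rounds `T` exceeds
`2Δ / (E ε (2η − L₁η²) − E η (L₁ η σ² + 2 λ L₂ G))` with `Δ = ℓ₀ − ℓ*`, then the average
over all rounds and local iterations of the expected squared gradient norms is below `ε`. -/
theorem fedproto_theorem2_convergence_rate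
    (L₁ L₂ G σ2 ε : ℝ) (hL₁ : 0 < L₁) (hL₂ : 0 < L₂) (hG : 0 < G)
    (hσ2 : 0 ≤ σ2) (hε : 0 < ε)
    (E T : ℕ) (hE : 1 ≤ E) (hT : 1 ≤ T)
    (lam η : ℝ) (hlam0 : 0 < lam) (hlam : lam < ε / (L₂ * G))
    (hη0 : 0 < η) (hη : η < 2 * (ε - lam * L₂ * G) / (L₁ * (ε + σ2)))
    (ℓ : ℕ → ℝ) (Gt : ℕ → ℝ) (hGt : ∀ t, 0 ≤ Gt t)
    (ℓstar : ℝ) (hstar : ∀ t ≤ T, ℓstar ≤ ℓ t)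
    (hbound : ∀ t < T,
      ℓ (t + 1) ≤ ℓ t - (η - L₁ * η ^ 2 / 2) * Gt t
        + (L₁ * (E : ℝ) * η ^ 2 / 2) * σ2 + lam * L₂ * η * (E : ℝ) * G)
    (hTbig : (T : ℝ) > 2 * (ℓ 0 - ℓstar) /
        ((E : ℝ) * ε * (2 * η - L₁ * η ^ 2)
          - (E : ℝ) * η * (L₁ * η * σ2 + 2 * lam * L₂ * G))) :
    (1 / ((T : ℝ) * (E : ℝ))) * ∑ t ∈ Finset.range T, Gt t < ε := by
  have hEpos : (0:ℝ) < (E:ℝ) := by exact_mod_cast hE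
  have hTpos : (0:ℝ) < (T:ℝ) := by exact_mod_cast hT
  have hlamG : lam * L₂ * G < ε := by
    have h := (lt_div_iff₀ (mul_pos hL₂ hG)).mp hlam
    nlinarith
  have hden : 0 < L₁ * (ε + σ2) := mul_pos hL₁ (by linarith)
  have hηkey : η * (L₁ * (ε + σ2)) < 2 * (ε - lam * L₂ * G) :=
    (lt_div_iff₀ hden).mp hη
  have hεσ : 0 < ε + σ2 := by linarith
  have hc : 0 < η - L₁ * η ^ 2 / 2 := by
    have h1 : L₁ * η < 2 := by
      nlinarith [mul_pos hlam0 (mul_pos hL₂ hG), hεσ]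
    nlinarith
  obtain ⟨b, hb⟩ : ∃ b : ℝ, b = (L₁ * (E : ℝ) * η ^ 2 / 2) * σ2 + lam * L₂ * η * (E : ℝ) * G :=
    ⟨_, rfl⟩
  have key : ∀ n ≤ T, ℓ n + (η - L₁ * η ^ 2 / 2) * ∑ t ∈ Finset.range n, Gt t
      ≤ ℓ 0 + (n : ℝ) * b := by
    intro n hn
    induction n with
    | zero => simp
    | succ k ih =>
      have hk : k < T := hn
      have hbk := hbound k hk
      have ihk := ih (le_of_lt hk)
      rw [Finset.sum_range_succ]
      push_cast
      rw [hb] at ihk ⊢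
      nlinarith
  have hD : 0 < (E : ℝ) * ε * (2 * η - L₁ * η ^ 2)
      - (E : ℝ) * η * (L₁ * η * σ2 + 2 * lam * L₂ * G) := by
    have h3 : 0 < 2 * η * (ε - lam * L₂ * G) - L₁ * η ^ 2 * (ε + σ2) := by
      nlinarith [mul_lt_mul_of_pos_left hηkey hη0]
    nlinarith [mul_pos hEpos h3]
  have hTD : 2 * (ℓ 0 - ℓstar) < (T : ℝ) * ((E : ℝ) * ε * (2 * η - L₁ * η ^ 2)
      - (E : ℝ) * η * (L₁ * η * σ2 + 2 * lam * L₂ * G)) := by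
    have := (div_lt_iff₀ hD).mp hTbig
    linarith
  have hkeyT := key T le_rfl
  have hstarT := hstar T le_rfl
  have hS : ∑ t ∈ Finset.range T, Gt t < ε * ((T : ℝ) * (E : ℝ)) := by
    have h2 : (η - L₁ * η ^ 2 / 2) * ∑ t ∈ Finset.range T, Gt t
        ≤ (ℓ 0 - ℓstar) + (T : ℝ) * b := by linarith
    have hid : (η - L₁ * η ^ 2 / 2) * (ε * ((T : ℝ) * (E : ℝ)))
        = ((T : ℝ) * ((E : ℝ) * ε * (2 * η - L₁ * η ^ 2)
          - (E : ℝ) * η * (L₁ * η * σ2 + 2 * lam * L₂ * G))) / 2 + (T : ℝ) * b := by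
      rw [hb]; ring
    have h4 : (η - L₁ * η ^ 2 / 2) * ∑ t ∈ Finset.range T, Gt t
        < (η - L₁ * η ^ 2 / 2) * (ε * ((T : ℝ) * (E : ℝ))) := by
      rw [hid]; linarith
    exact lt_of_mul_lt_mul_left h4 (le_of_lt hc)
  have hTE : 0 < (T : ℝ) * (E : ℝ) := mul_pos hTpos hEpos
  rw [one_div, inv_mul_lt_iff₀ hTE]
  linarith
end
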